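/- Recurrence for twisted contractions, paired case: if n ≥ 3 and π ∈ P_{1,2}(n) has 1 paired with j = j₁^π, then W^T_π = W^T_{d_p(π)} ∘ C₁ T_{2,j}, where d_p(π) ∈ P_{1,2}(n−2) is obtained by deleting {1,j} and relabeling, and T_{2,j} = T₂⋯T_{j−1}. -/

import Mathlib

open scoped Classical

/-- `π` is an incomplete matching of `[n] = {1,…,n}`. -/
def IsIM (n : ℕ) (π : Finset (Finset ℕ)) : Prop :=
  (∀ B ∈ π, B.card = 1 ∨ B.card = 2) ∧
  (∀ B ∈ π, ∀ C ∈ π, B ≠ C → Disjoint B C) ∧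
  π.biUnion id = Finset.Icc 1 n

/-- `Tprod T a b = T_a T_{a+1} ⋯ T_{b-1}` (the identity if `b ≤ a`). -/
noncomputable def Tprod {F : Type*} [NormedAddCommGroup F] [InnerProductSpace ℂ F]
    (T : ℕ → F →L[ℂ] F) (a b : ℕ) : F →L[ℂ] F :=
  ((List.range' a (b - a)).map T).prod

/-- `rcount done m`: number of endpoints of the already-processed pairings `done`
that are `< m`. -/
def rcount (done : List (ℕ × ℕ)) (m : ℕ) : ℕ :=
  (done.map (fun p => (if p.1 < m then 1 else 0) + (if p.2 < m then 1 else 0))).sum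

/-- The twisted contraction word associated to a list of pairings. -/
noncomputable def Wlist {F : Type*} [NormedAddCommGroup F] [InnerProductSpace ℂ F]
    (C T : ℕ → F →L[ℂ] F) : List (ℕ × ℕ) → List (ℕ × ℕ) → (F →L[ℂ] F)
  | _, [] => 1
  | done, p :: rest =>
      Wlist C T (p :: done) rest *
        (C (p.1 - rcount done p.1) *
          Tprod T (p.1 - rcount done p.1 + 1) (p.2 - rcount done p.2))

-- aux
lemma rcount_cons (p : ℕ × ℕ) (d : List (ℕ × ℕ)) (m : ℕ) :
    rcount (p :: d) m
      = ((if p.1 < m then 1 else 0) + (if p.2 < m then 1 else 0)) + rcount d m := by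
  simp [rcount]

lemma Wlist_congr {F : Type*} [NormedAddCommGroup F] [InnerProductSpace ℂ F]
    (C T : ℕ → F →L[ℂ] F) (rest : List (ℕ × ℕ)) :
    ∀ d1 d2 : List (ℕ × ℕ), (∀ m, rcount d1 m = rcount d2 m) →
      Wlist C T d1 rest = Wlist C T d2 rest := by
  induction rest with
  | nil => intro d1 d2 h; rfl
  | cons p rs ih =>
      intro d1 d2 h
      show Wlist C T (p :: d1) rs * _ = Wlist C T (p :: d2) rs * _
      rw [h p.1, h p.2, ih (p::d1) (p::d2) (by intro m; rw [rcount_cons, rcount_cons, h m])]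

def fm (j m : ℕ) : ℕ := if m < j then m - 1 else m - 2

lemma fm_lt_iff {j a b : ℕ} (hj : 2 ≤ j) (ha : 2 ≤ a) (ha' : a ≠ j)
    (hb : 2 ≤ b) (hb' : b ≠ j) : fm j a < fm j b ↔ a < b := by
  unfold fm; split_ifs <;> omega

lemma fm_eq {j m : ℕ} (hj : 2 ≤ j) (hm : 2 ≤ m) (hm' : m ≠ j) :
    fm j m = m - ((if 1 < m then 1 else 0) + (if j < m then 1 else 0)) := by
  unfold fm; split_ifs <;> omega

def Good (j : ℕ) (p : ℕ × ℕ) : Prop := 2 ≤ p.1 ∧ p.1 ≠ j ∧ 2 ≤ p.2 ∧ p.2 ≠ j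

lemma rcount_map {j m : ℕ} (hj : 2 ≤ j) (hm : 2 ≤ m) (hm' : m ≠ j)
    (d : List (ℕ × ℕ)) (hd : ∀ q ∈ d, Good j q) :
    rcount (d.map (fun p => (fm j p.1, fm j p.2))) (fm j m) = rcount d m := by
  induction d with
  | nil => rfl
  | cons q qs ih =>
      have hq := hd q (by simp)
      obtain ⟨h1, h2, h3, h4⟩ := hq
      simp only [List.map_cons, rcount_cons]
      rw [ih (fun r hr => hd r (by simp [hr]))]
      congr 2
      · simp [fm_lt_iff hj h1 h2 hm hm']
      · simp [fm_lt_iff hj h3 h4 hm hm']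

lemma key {F : Type*} [NormedAddCommGroup F] [InnerProductSpace ℂ F]
    (C T : ℕ → F →L[ℂ] F) {j : ℕ} (hj : 2 ≤ j) (rest : List (ℕ × ℕ)) :
    ∀ done : List (ℕ × ℕ), (∀ q ∈ rest, Good j q) → (∀ q ∈ done, Good j q) →
      Wlist C T ((1, j) :: done) rest
        = Wlist C T (done.map (fun p => (fm j p.1, fm j p.2)))
            (rest.map (fun p => (fm j p.1, fm j p.2))) := by
  induction rest with
  | nil => intro done _ _; rfl
  | cons p rs ih =>
      intro done hrest hdone
      have hp := hrest p (by simp)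
      obtain ⟨h1, h2, h3, h4⟩ := hp
      have hrs : ∀ q ∈ rs, Good j q := fun q hq => hrest q (by simp [hq])
      show Wlist C T (p :: (1, j) :: done) rs * _
          = Wlist C T ((fm j p.1, fm j p.2) :: done.map _) (rs.map _) * _
      have swap : Wlist C T (p :: (1, j) :: done) rs
          = Wlist C T ((1, j) :: p :: done) rs := by
        apply Wlist_congr
        intro m; rw [rcount_cons, rcount_cons, rcount_cons, rcount_cons]; ring
      rw [swap, ih (p :: done) hrs (by
        intro q hq; rcases List.mem_cons.1 hq with h | h
        · exact h ▸ ⟨h1, h2, h3, h4⟩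
        · exact hdone q h)]
      simp only [List.map_cons]
      congr 2
      · show C (p.1 - rcount ((1,j)::done) p.1) = C (fm j p.1 - rcount (done.map _) (fm j p.1))
        rw [rcount_map hj h1 h2 done hdone, rcount_cons, fm_eq hj h1 h2]
        congr 1
        simp only [show ((1,j):ℕ×ℕ).1 = 1 from rfl, show ((1,j):ℕ×ℕ).2 = j from rfl]
        split_ifs <;> omega
      · show Tprod T (p.1 - rcount ((1,j)::done) p.1 + 1) (p.2 - rcount ((1,j)::done) p.2)
            = Tprod T (fm j p.1 - rcount (done.map _) (fm j p.1) + 1)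
                (fm j p.2 - rcount (done.map _) (fm j p.2))
        rw [rcount_map hj h1 h2 done hdone, rcount_map hj h3 h4 done hdone,
            rcount_cons, rcount_cons, fm_eq hj h1 h2, fm_eq hj h3 h4]
        congr 1 <;> (simp only [show ((1,j):ℕ×ℕ).1 = 1 from rfl, show ((1,j):ℕ×ℕ).2 = j from rfl]; split_ifs <;> omega)

/-- Paired recurrence for twisted contractions: if `n ≥ 3` and `π ∈ P₁,₂(n)` has `1`
paired with `j = j₁^π`, then `W^T_π = W^T_{d_p(π)} ∘ C₁ T_{2,j}`, where `d_p(π)` is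
obtained by deleting `{1,j}` and relabeling `[n] \ {1,j}` order-preservingly
(`m ↦ m−1` if `m < j`, `m ↦ m−2` if `m > j`).  The pairings of `π` in the left
standard order are `(1,j)` followed by `rest`. -/
theorem W_paired_recurrence {F : Type*} [NormedAddCommGroup F]
    [InnerProductSpace ℂ F] [CompleteSpace F]
    (C T : ℕ → F →L[ℂ] F)
    (n : ℕ) (hn : 3 ≤ n) (π : Finset (Finset ℕ))
    (hπ : IsIM n π) (j : ℕ) (hj : ({1, j} : Finset ℕ) ∈ π) (hj2 : 2 ≤ j)
    (rest : List (ℕ × ℕ))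
    (hL : ∀ p : ℕ × ℕ,
      p ∈ ((1, j) :: rest) ↔ (({p.1, p.2} : Finset ℕ) ∈ π ∧ p.1 < p.2))
    (hnd : ((1, j) :: rest).Nodup)
    (hsort : ((1, j) :: rest).Pairwise (fun p q => p.1 < q.1)) :
    Wlist C T [] ((1, j) :: rest) =
      Wlist C T []
          (rest.map (fun p =>
            (if p.1 < j then p.1 - 1 else p.1 - 2,
             if p.2 < j then p.2 - 1 else p.2 - 2))) *
        (C 1 * Tprod T 2 j) := by
  have hgood : ∀ q ∈ rest, Good j q := by
    intro q hq
    have hmem : ({q.1, q.2} : Finset ℕ) ∈ π ∧ q.1 < q.2 :=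
      (hL q).1 (List.mem_cons_of_mem _ hq)
    have h1 : 1 < q.1 := (List.pairwise_cons.1 hsort).1 q hq
    have hqne : q ≠ (1, j) := by
      intro h; exact (List.nodup_cons.1 hnd).1 (h ▸ hq)
    have hblock : ({q.1, q.2} : Finset ℕ) ≠ {1, j} → Disjoint ({q.1, q.2} : Finset ℕ) ({1, j} : Finset ℕ) :=
      hπ.2.1 _ hmem.1 _ hj
    have hne1 : q.1 ≠ j := by
      intro h
      have hd : ¬ Disjoint ({q.1, q.2} : Finset ℕ) ({1, j} : Finset ℕ) := by
        rw [Finset.not_disjoint_iff]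
        exact ⟨j, by simp [h], by simp⟩
      have heq : ({q.1, q.2} : Finset ℕ) = {1, j} := by
        by_contra hne; exact hd (hblock hne)
      have : q.2 ∈ ({1, j} : Finset ℕ) := heq ▸ (by simp : q.2 ∈ ({q.1, q.2} : Finset ℕ))
      simp only [Finset.mem_insert, Finset.mem_singleton] at this
      omega
    have hne2 : q.2 ≠ j := by
      intro h
      have hd : ¬ Disjoint ({q.1, q.2} : Finset ℕ) ({1, j} : Finset ℕ) := by
        rw [Finset.not_disjoint_iff]
        exact ⟨j, by simp [h], by simp⟩
      have heq : ({q.1, q.2} : Finset ℕ) = {1, j} := by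
        by_contra hne; exact hd (hblock hne)
      have : q.1 ∈ ({1, j} : Finset ℕ) := heq ▸ (by simp : q.1 ∈ ({q.1, q.2} : Finset ℕ))
      simp only [Finset.mem_insert, Finset.mem_singleton] at this
      have : q.1 = 1 := by omega
      apply hqne
      have := hmem.2
      ext <;> omega
    exact ⟨by omega, hne1, by omega, hne2⟩
  show Wlist C T ((1, j) :: []) rest * (C (1 - rcount [] 1) * Tprod T (1 - rcount [] 1 + 1) (j - rcount [] j)) = _
  rw [key C T hj2 rest [] hgood (by simp)]
  simp only [rcount, List.map_nil, List.sum_nil, Nat.sub_zero, fm]
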